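/- Let T = −Id ∈ GL(2,ℝ) and let a ∈ ℝ² with 0 < ‖a‖ < 1. Then the map T̄ₐ(x) = (a−x)/‖a−x‖ on S¹ has exactly four periodic points of order dividing 2: namely ā = a/‖a‖, −ā, and the two points x₀ ∈ S¹ satisfying ‖a − x₀‖ = 1. -/

import Mathlib

/-- The "affine" map `x ↦ (a + T(x))/‖a + T(x)‖` induced on the unit sphere. -/
noncomputable def affAct {m : ℕ} (A : Matrix (Fin m) (Fin m) ℝ)
    (a x : EuclideanSpace ℝ (Fin m)) : EuclideanSpace ℝ (Fin m) :=
  ‖a + Matrix.toEuclideanLin A x‖⁻¹ • (a + Matrix.toEuclideanLin A x)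

noncomputable def fm (a x : EuclideanSpace ℝ (Fin 2)) : EuclideanSpace ℝ (Fin 2) :=
  ‖a - x‖⁻¹ • (a - x)

lemma affAct_neg_one (a x : EuclideanSpace ℝ (Fin 2)) :
    affAct (-1 : Matrix (Fin 2) (Fin 2) ℝ) a x = fm a x := by
  unfold affAct fm
  rw [show Matrix.toEuclideanLin (-1 : Matrix (Fin 2) (Fin 2) ℝ) x = -x from by
    simp [Matrix.toEuclideanLin_eq_toLin], ← sub_eq_add_neg]

lemma norm_sq2 (x : EuclideanSpace ℝ (Fin 2)) : ‖x‖ ^ 2 = (x 0) ^ 2 + (x 1) ^ 2 := by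
  rw [EuclideanSpace.norm_eq, Real.sq_sqrt (by positivity)]
  simp [Fin.sum_univ_two, sq_abs]

lemma sq_one_of {k : ℝ} (h0 : 0 ≤ k) (h : k ^ 2 = 1) : k = 1 := by
  have h1 : k ≤ 1 := by nlinarith
  have h2 : 1 ≤ k := by nlinarith
  linarith

lemma fm_of_norm_one {a x : EuclideanSpace ℝ (Fin 2)} (h : ‖a - x‖ = 1) : fm a x = a - x := by
  unfold fm; rw [h]; simp

lemma norm_fm {a x : EuclideanSpace ℝ (Fin 2)} (h : 0 < ‖a - x‖) : ‖fm a x‖ = 1 := by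
  unfold fm
  rw [norm_smul, norm_inv, norm_norm, inv_mul_cancel₀ h.ne']

lemma pos_sub {a x : EuclideanSpace ℝ (Fin 2)} (ha1 : ‖a‖ < 1) (hx : ‖x‖ = 1) :
    0 < ‖a - x‖ := by
  have h := norm_sub_norm_le x a
  rw [norm_sub_rev] at h
  linarith [hx ▸ h]

lemma norm_sub_proj (a : EuclideanSpace ℝ (Fin 2)) (ha0 : 0 < ‖a‖) (ha1 : ‖a‖ ≤ 1) :
    ‖a - ‖a‖⁻¹ • a‖ = 1 - ‖a‖ := by
  have e1 : a - ‖a‖⁻¹ • a = (1 - ‖a‖⁻¹) • a := by rw [sub_smul, one_smul]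
  have hinv : 1 ≤ ‖a‖⁻¹ := (one_le_inv₀ ha0).mpr ha1
  rw [e1, norm_smul, Real.norm_eq_abs, abs_of_nonpos (by linarith)]
  field_simp
  ring

lemma norm_add_proj (a : EuclideanSpace ℝ (Fin 2)) (ha0 : 0 < ‖a‖) :
    ‖a + ‖a‖⁻¹ • a‖ = 1 + ‖a‖ := by
  have e1 : a + ‖a‖⁻¹ • a = (1 + ‖a‖⁻¹) • a := by rw [add_smul, one_smul]
  have hinv : 0 < ‖a‖⁻¹ := by positivity
  rw [e1, norm_smul, Real.norm_eq_abs, abs_of_pos (by linarith), add_mul, one_mul,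
    inv_mul_cancel₀ ha0.ne', add_comm]

lemma fm_proj (a : EuclideanSpace ℝ (Fin 2)) (ha0 : 0 < ‖a‖) (ha1 : ‖a‖ < 1) :
    fm a (‖a‖⁻¹ • a) = -(‖a‖⁻¹ • a) := by
  unfold fm
  rw [norm_sub_proj a ha0 ha1.le, show a - ‖a‖⁻¹ • a = (1 - ‖a‖⁻¹) • a from by
    rw [sub_smul, one_smul], smul_smul, ← neg_smul]
  congr 1
  have h1 : ‖a‖ ≠ 0 := ha0.ne'
  have h2 : (1 : ℝ) - ‖a‖ ≠ 0 := by linarith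
  field_simp
  ring

lemma fm_neg_proj (a : EuclideanSpace ℝ (Fin 2)) (ha0 : 0 < ‖a‖) :
    fm a (-(‖a‖⁻¹ • a)) = ‖a‖⁻¹ • a := by
  unfold fm
  rw [sub_neg_eq_add, norm_add_proj a ha0, show a + ‖a‖⁻¹ • a = (1 + ‖a‖⁻¹) • a from by
    rw [add_smul, one_smul], smul_smul]
  congr 1
  have h1 : ‖a‖ ≠ 0 := ha0.ne'
  have h2 : (1 : ℝ) + ‖a‖ ≠ 0 := by positivity
  have e : (1 + ‖a‖⁻¹) = ‖a‖⁻¹ * (1 + ‖a‖) := by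
    rw [mul_add, mul_one, inv_mul_cancel₀ h1, add_comm]
  rw [e, ← mul_assoc, mul_comm ((1 + ‖a‖)⁻¹) _, mul_assoc, inv_mul_cancel₀ h2, mul_one]

lemma char (a : EuclideanSpace ℝ (Fin 2)) (ha0 : 0 < ‖a‖) (ha1 : ‖a‖ < 1)
    (x : EuclideanSpace ℝ (Fin 2)) (hx : ‖x‖ = 1) :
    fm a (fm a x) = x ↔ x = ‖a‖⁻¹ • a ∨ x = -(‖a‖⁻¹ • a) ∨ ‖a - x‖ = 1 := by
  constructor
  · intro hff
    have hrpos : 0 < ‖a - x‖ := pos_sub ha1 hx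
    by_cases hr1 : ‖a - x‖ = 1
    · exact Or.inr (Or.inr hr1)
    set r := ‖a - x‖ with hr
    set y := fm a x with hy
    have hy1 : ‖y‖ = 1 := norm_fm hrpos
    have hspos : 0 < ‖a - y‖ := pos_sub ha1 hy1
    set s := ‖a - y‖ with hs
    have hax : a - x = r • y := by
      rw [hy]; unfold fm; rw [smul_smul, mul_inv_cancel₀ hrpos.ne', one_smul]
    have hay : a - y = s • x := by
      have h : fm a y = x := hff
      unfold fm at h
      rw [← h, smul_smul, mul_inv_cancel₀ hspos.ne', one_smul]
    have key : (1 - r) • y = (1 - s) • x := by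
      rw [sub_smul, one_smul, sub_smul, one_smul, ← hax, ← hay]; abel
    have hnorm : |1 - r| = |1 - s| := by
      have := congrArg norm key
      rwa [norm_smul, norm_smul, Real.norm_eq_abs, Real.norm_eq_abs, hx, hy1,
        mul_one, mul_one] at this
    have hrne : (1 : ℝ) - r ≠ 0 := fun h => hr1 (by linarith [h])
    have hsne : (1 : ℝ) - s ≠ 0 := by
      intro h; rw [h, abs_zero, abs_eq_zero] at hnorm; exact hrne hnorm
    have hyx : y = ((1 - s) / (1 - r)) • x := by
      rw [div_eq_mul_inv, mul_comm, mul_smul]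
      rw [← key, smul_smul, inv_mul_cancel₀ hrne, one_smul]
    have habs : |(1 - s) / (1 - r)| = 1 := by
      rw [abs_div, hnorm, div_self (by simpa using hsne)]
    rcases (abs_eq (by norm_num : (0:ℝ) ≤ 1)).mp habs with hc | hc
    · -- y = x : impossible since ‖a‖ < 1
      rw [hc, one_smul] at hyx
      rw [hyx] at hax
      have hA : a = (1 + r) • x := by
        rw [add_smul, one_smul]
        have := sub_eq_iff_eq_add.mp hax
        rw [this]; abel
      have : ‖a‖ = 1 + r := by
        rw [hA, norm_smul, Real.norm_eq_abs, abs_of_pos (by linarith), hx, mul_one]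
      linarith
    · rw [hc, neg_one_smul] at hyx
      rw [hyx] at hax
      have hA : a = (1 - r) • x := by
        rw [sub_smul, one_smul]
        have h2 := sub_eq_iff_eq_add.mp hax
        rw [h2, smul_neg]; abel
      have hna : ‖a‖ = |1 - r| := by
        rw [hA, norm_smul, Real.norm_eq_abs, hx, mul_one]
      rcases lt_or_gt_of_ne (fun h => hr1 h.symm) with h | h
      · -- 1 < r : x = -(‖a‖⁻¹ • a)
        right; left
        have hna' : ‖a‖ = r - 1 := by rw [hna, abs_of_neg (by linarith)]; ring
        have hr1' : r - 1 ≠ 0 := by intro h'; exact hrne (by linarith)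
        have hcg := congrArg (fun z => (r - 1)⁻¹ • z) hA
        simp only [smul_smul] at hcg
        rw [show (r - 1)⁻¹ * (1 - r) = -1 from by field_simp; ring, neg_one_smul] at hcg
        rw [hna', hcg, neg_neg]
      · -- r < 1 : x = ‖a‖⁻¹ • a
        left
        have hna' : ‖a‖ = 1 - r := by rw [hna, abs_of_pos (by linarith)]
        have hcg := congrArg (fun z => (1 - r)⁻¹ • z) hA
        simp only [smul_smul] at hcg
        rw [inv_mul_cancel₀ hrne, one_smul] at hcg
        rw [hna', ← hcg]
  · rintro (rfl | rfl | h)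
    · rw [fm_proj a ha0 ha1, fm_neg_proj a ha0]
    · rw [fm_neg_proj a ha0, fm_proj a ha0 ha1]
    · rw [fm_of_norm_one h, fm_of_norm_one (by simpa using hx), sub_sub_cancel]

theorem stmt19 (a : EuclideanSpace ℝ (Fin 2)) (ha0 : 0 < ‖a‖) (ha1 : ‖a‖ < 1) :
    ∃ x₀ y₀ : EuclideanSpace ℝ (Fin 2), x₀ ≠ y₀ ∧
      {x : EuclideanSpace ℝ (Fin 2) | ‖x‖ = 1 ∧ ‖a - x‖ = 1} = {x₀, y₀} ∧
      {x : EuclideanSpace ℝ (Fin 2) | ‖x‖ = 1 ∧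
          affAct (-1 : Matrix (Fin 2) (Fin 2) ℝ) a
            (affAct (-1 : Matrix (Fin 2) (Fin 2) ℝ) a x) = x} =
        {‖a‖⁻¹ • a, -(‖a‖⁻¹ • a), x₀, y₀} ∧
      ({‖a‖⁻¹ • a, -(‖a‖⁻¹ • a), x₀, y₀} : Set (EuclideanSpace ℝ (Fin 2))).ncard = 4 := by
  classical
  have hpq : ‖a‖ ^ 2 = (a 0) ^ 2 + (a 1) ^ 2 := norm_sq2 a
  set p := a 0 with hp
  set q := a 1 with hq
  have hn0 : 0 < p ^ 2 + q ^ 2 := by rw [← hpq]; positivity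
  have hn1 : p ^ 2 + q ^ 2 < 1 := by rw [← hpq]; nlinarith
  set t : ℝ := Real.sqrt ((4 - (p ^ 2 + q ^ 2)) / (4 * (p ^ 2 + q ^ 2))) with htdef
  have htarg : 0 < (4 - (p ^ 2 + q ^ 2)) / (4 * (p ^ 2 + q ^ 2)) :=
    div_pos (by linarith) (by linarith)
  have ht0 : 0 < t := Real.sqrt_pos.mpr htarg
  have ht2 : t ^ 2 = (4 - (p ^ 2 + q ^ 2)) / (4 * (p ^ 2 + q ^ 2)) :=
    Real.sq_sqrt htarg.le
  have htn : t ^ 2 * (p ^ 2 + q ^ 2) = (4 - (p ^ 2 + q ^ 2)) / 4 := by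
    rw [ht2]; field_simp
  set x₀ : EuclideanSpace ℝ (Fin 2) :=
    (WithLp.equiv 2 (Fin 2 → ℝ)).symm ![p / 2 - t * q, q / 2 + t * p] with hx₀def
  set y₀ : EuclideanSpace ℝ (Fin 2) :=
    (WithLp.equiv 2 (Fin 2 → ℝ)).symm ![p / 2 + t * q, q / 2 - t * p] with hy₀def
  have hx₀0 : x₀ 0 = p / 2 - t * q := rfl
  have hx₀1 : x₀ 1 = q / 2 + t * p := rfl
  have hy₀0 : y₀ 0 = p / 2 + t * q := rfl
  have hy₀1 : y₀ 1 = q / 2 - t * p := rfl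
  have hx₀norm : ‖x₀‖ = 1 := by
    apply sq_one_of (norm_nonneg _)
    rw [norm_sq2, hx₀0, hx₀1]
    linear_combination htn
  have hy₀norm : ‖y₀‖ = 1 := by
    apply sq_one_of (norm_nonneg _)
    rw [norm_sq2, hy₀0, hy₀1]
    linear_combination htn
  have hax₀ : ‖a - x₀‖ = 1 := by
    apply sq_one_of (norm_nonneg _)
    rw [norm_sq2]
    have e0 : (a - x₀) 0 = p - (p / 2 - t * q) := rfl
    have e1 : (a - x₀) 1 = q - (q / 2 + t * p) := rfl
    rw [e0, e1]
    linear_combination htn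
  have hay₀ : ‖a - y₀‖ = 1 := by
    apply sq_one_of (norm_nonneg _)
    rw [norm_sq2]
    have e0 : (a - y₀) 0 = p - (p / 2 + t * q) := rfl
    have e1 : (a - y₀) 1 = q - (q / 2 - t * p) := rfl
    rw [e0, e1]
    linear_combination htn
  have hx₀y₀ : x₀ ≠ y₀ := by
    intro h
    have h0 : p / 2 - t * q = p / 2 + t * q := by rw [← hx₀0, ← hy₀0, h]
    have h1 : q / 2 + t * p = q / 2 - t * p := by rw [← hx₀1, ← hy₀1, h]
    have hq0 : q = 0 := by
      rcases mul_eq_zero.mp (show t * q = 0 by linarith) with h | h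
      · exact absurd h ht0.ne'
      · exact h
    have hp0 : p = 0 := by
      rcases mul_eq_zero.mp (show t * p = 0 by linarith) with h | h
      · exact absurd h ht0.ne'
      · exact h
    rw [hp0, hq0] at hn0; norm_num at hn0
  -- first set equality
  have hset1 : {x : EuclideanSpace ℝ (Fin 2) | ‖x‖ = 1 ∧ ‖a - x‖ = 1} = {x₀, y₀} := by
    ext x
    simp only [Set.mem_setOf_eq, Set.mem_insert_iff, Set.mem_singleton_iff]
    constructor
    · rintro ⟨hx, hax⟩
      have h1 : (x 0) ^ 2 + (x 1) ^ 2 = 1 := by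
        have := norm_sq2 x; rw [hx] at this; linarith [this]
      have h2 : (p - x 0) ^ 2 + (q - x 1) ^ 2 = 1 := by
        have h := norm_sq2 (a - x); rw [hax] at h
        have e0 : (a - x) 0 = p - x 0 := rfl
        have e1 : (a - x) 1 = q - x 1 := rfl
        rw [e0, e1] at h; linarith [h]
      set u := x 0 with hu'
      set v := x 1 with hv'
      have hl : p * u + q * v = (p ^ 2 + q ^ 2) / 2 := by linear_combination (h1 - h2) / 2
      have hw : (p * v - q * u) ^ 2 = ((p ^ 2 + q ^ 2) * t) ^ 2 := by
        linear_combination (p ^ 2 + q ^ 2) * h1 -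
          (p * u + q * v + (p ^ 2 + q ^ 2) / 2) * hl - (p ^ 2 + q ^ 2) * htn
      have hne : (p ^ 2 + q ^ 2) ≠ 0 := hn0.ne'
      rcases sq_eq_sq_iff_eq_or_eq_neg.mp hw with hc | hc
      · left
        have hu : u = p / 2 - t * q := mul_left_cancel₀ hne
          (by linear_combination p * hl - q * hc)
        have hv : v = q / 2 + t * p := mul_left_cancel₀ hne
          (by linear_combination q * hl + p * hc)
        ext i
        fin_cases i
        · exact hu
        · exact hv
      · right
        have hu : u = p / 2 + t * q := mul_left_cancel₀ hne
          (by linear_combination p * hl - q * hc)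
        have hv : v = q / 2 - t * p := mul_left_cancel₀ hne
          (by linear_combination q * hl + p * hc)
        ext i
        fin_cases i
        · exact hu
        · exact hv
    · rintro (rfl | rfl)
      · exact ⟨hx₀norm, hax₀⟩
      · exact ⟨hy₀norm, hay₀⟩
  -- distinctness facts
  have hbn : ‖(‖a‖⁻¹ • a)‖ = 1 := by
    rw [norm_smul, norm_inv, norm_norm, inv_mul_cancel₀ ha0.ne']
  have hnab : ‖a - ‖a‖⁻¹ • a‖ = 1 - ‖a‖ := norm_sub_proj a ha0 ha1.le
  have hnab2 : ‖a - -(‖a‖⁻¹ • a)‖ = 1 + ‖a‖ := by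
    rw [sub_neg_eq_add]; exact norm_add_proj a ha0
  have hb_ne_nb : ‖a‖⁻¹ • a ≠ -(‖a‖⁻¹ • a) := by
    intro h
    have : ‖a - ‖a‖⁻¹ • a‖ = ‖a - -(‖a‖⁻¹ • a)‖ := by rw [← h]
    rw [hnab, hnab2] at this
    linarith
  have hb_ne_x₀ : ‖a‖⁻¹ • a ≠ x₀ := by
    intro h; rw [h, hax₀] at hnab; linarith
  have hb_ne_y₀ : ‖a‖⁻¹ • a ≠ y₀ := by
    intro h; rw [h, hay₀] at hnab; linarith
  have hnb_ne_x₀ : -(‖a‖⁻¹ • a) ≠ x₀ := by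
    intro h; rw [h, hax₀] at hnab2; linarith
  have hnb_ne_y₀ : -(‖a‖⁻¹ • a) ≠ y₀ := by
    intro h; rw [h, hay₀] at hnab2; linarith
  refine ⟨x₀, y₀, hx₀y₀, hset1, ?_, ?_⟩
  · -- second set equality
    ext x
    simp only [Set.mem_setOf_eq, affAct_neg_one, Set.mem_insert_iff, Set.mem_singleton_iff]
    constructor
    · rintro ⟨hx, hff⟩
      rcases (char a ha0 ha1 x hx).mp hff with h | h | h
      · exact Or.inl h
      · exact Or.inr (Or.inl h)
      · have hx' : x ∈ ({x₀, y₀} : Set (EuclideanSpace ℝ (Fin 2))) := by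
          rw [← hset1]; exact ⟨hx, h⟩
        rcases hx' with h' | h'
        · exact Or.inr (Or.inr (Or.inl h'))
        · exact Or.inr (Or.inr (Or.inr h'))
    · rintro (rfl | rfl | rfl | rfl)
      · exact ⟨hbn, (char a ha0 ha1 _ hbn).mpr (Or.inl rfl)⟩
      · have h : ‖-(‖a‖⁻¹ • a)‖ = 1 := by rw [norm_neg]; exact hbn
        exact ⟨h, (char a ha0 ha1 _ h).mpr (Or.inr (Or.inl rfl))⟩
      · exact ⟨hx₀norm, (char a ha0 ha1 _ hx₀norm).mpr (Or.inr (Or.inr hax₀))⟩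
      · exact ⟨hy₀norm, (char a ha0 ha1 _ hy₀norm).mpr (Or.inr (Or.inr hay₀))⟩
  · -- ncard
    rw [Set.ncard_insert_of_notMem (by
        simp only [Set.mem_insert_iff, Set.mem_singleton_iff]
        push_neg
        exact ⟨hb_ne_nb, hb_ne_x₀, hb_ne_y₀⟩)
      ((Set.finite_singleton _).insert _ |>.insert _),
      Set.ncard_insert_of_notMem (by
        simp only [Set.mem_insert_iff, Set.mem_singleton_iff]
        push_neg
        exact ⟨hnb_ne_x₀, hnb_ne_y₀⟩)
      ((Set.finite_singleton _).insert _),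
      Set.ncard_pair hx₀y₀]
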